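/- Let G be a simple graph on a finite vertex type V with edge weights w : Sym2 V → ℝ, and let F be a minimum spanning forest of G. Then for every real threshold t, the number of edges of F of weight at most t equals the cardinality of V minus the number of connected components of G_{≤t}. In particular, the edges of F of weight at most t form a spanning forest of G_{≤t}. -/

import Mathlib

/-- `F` is a spanning forest of `H`: a spanning subgraph (edges a subset of those of `H`)
that is acyclic and has the same reachability relation as `H`. -/
def IsSpanningForest {V : Type*} (H F : SimpleGraph V) : Prop :=
  F ≤ H ∧ F.IsAcyclic ∧ ∀ u v : V, F.Reachable u v ↔ H.Reachable u v

/-- The total weight of the edges of a graph. -/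
noncomputable def totalWeight {V : Type*} (w : Sym2 V → ℝ) (F : SimpleGraph V) : ℝ :=
  ∑ᶠ e ∈ F.edgeSet, w e

/-- `F` is a minimum spanning forest of `H` with respect to the weights `w`. -/
def IsMSF {V : Type*} (w : Sym2 V → ℝ) (H F : SimpleGraph V) : Prop :=
  IsSpanningForest H F ∧
    ∀ F' : SimpleGraph V, IsSpanningForest H F' → totalWeight w F ≤ totalWeight w F'

/-- The spanning subgraph `G_{≤ t}` of `G` consisting of the edges of `G` of weight at most `t`. -/
def leSub {V : Type*} (w : Sym2 V → ℝ) (G : SimpleGraph V) (t : ℝ) : SimpleGraph V :=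
  SimpleGraph.fromEdgeSet {e ∈ G.edgeSet | w e ≤ t}

section Aux
open SimpleGraph
variable {V : Type*}

lemma reach_of_adj_reach {F K : SimpleGraph V}
    (h : ∀ u v : V, F.Adj u v → K.Reachable u v) {u v : V} (hr : F.Reachable u v) :
    K.Reachable u v := by
  obtain ⟨p⟩ := hr
  induction p with
  | nil => exact Reachable.refl _
  | cons ha _ ih => exact (h _ _ ha).trans ih

lemma acyclic_mono {F H : SimpleGraph V} (hle : H ≤ F) (h : F.IsAcyclic) : H.IsAcyclic := by
  intro v c hc
  exact h (c.mapLe hle) (hc.mapLe hle)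

lemma reachable_sup_edge_iff {H : SimpleGraph V} {a b : V} {u v : V} :
    (H ⊔ edge a b).Reachable u v ↔
      H.Reachable u v ∨ (H.Reachable u a ∧ H.Reachable b v) ∨
        (H.Reachable u b ∧ H.Reachable a v) := by
  constructor
  · rintro ⟨p⟩
    induction p with
    | nil => exact Or.inl (Reachable.refl _)
    | @cons x c _ ha p ih =>
      rcases (sup_adj _ _ _ _).mp ha with hH | hE
      · rcases ih with h | ⟨h1, h2⟩ | ⟨h1, h2⟩
        · exact Or.inl (hH.reachable.trans h)
        · exact Or.inr (Or.inl ⟨hH.reachable.trans h1, h2⟩)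
        · exact Or.inr (Or.inr ⟨hH.reachable.trans h1, h2⟩)
      · rw [edge_adj] at hE
        rcases hE.1 with ⟨rfl, rfl⟩ | ⟨rfl, rfl⟩
        · rcases ih with h | ⟨h1, h2⟩ | ⟨h1, h2⟩
          · exact Or.inr (Or.inl ⟨Reachable.refl _, h⟩)
          · exact Or.inr (Or.inl ⟨Reachable.refl _, h2⟩)
          · exact Or.inl h2
        · rcases ih with h | ⟨h1, h2⟩ | ⟨h1, h2⟩
          · exact Or.inr (Or.inr ⟨Reachable.refl _, h⟩)
          · exact Or.inl h2
          · exact Or.inr (Or.inr ⟨Reachable.refl _, h2⟩)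
  · have hmono : ∀ {x y : V}, H.Reachable x y → (H ⊔ edge a b).Reachable x y :=
      fun h => h.mono le_sup_left
    rintro (h | ⟨h1, h2⟩ | ⟨h1, h2⟩)
    · exact hmono h
    · rcases eq_or_ne a b with rfl | hne
      · exact (hmono h1).trans (hmono h2)
      · have : (H ⊔ edge a b).Adj a b := by
          rw [sup_adj, edge_adj]; exact Or.inr ⟨Or.inl ⟨rfl, rfl⟩, hne⟩
        exact ((hmono h1).trans this.reachable).trans (hmono h2)
    · rcases eq_or_ne a b with rfl | hne
      · exact (hmono h1).trans (hmono h2)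
      · have : (H ⊔ edge a b).Adj b a := by
          rw [sup_adj, edge_adj]; exact Or.inr ⟨Or.inr ⟨rfl, rfl⟩, hne.symm⟩
        exact ((hmono h1).trans this.reachable).trans (hmono h2)

lemma sup_edge_decomp {F : SimpleGraph V} {x y : V} (h : F.Adj x y) :
    F = F.deleteEdges {s(x, y)} ⊔ edge x y := by
  rw [← edgeSet_inj, edgeSet_sup, edgeSet_deleteEdges, edge_edgeSet_of_ne h.ne,
    Set.diff_union_self, Set.union_eq_self_of_subset_right
      (Set.singleton_subset_iff.mpr (F.mem_edgeSet.mpr h))]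

lemma trail_split {F : SimpleGraph V} {x y : V} :
    ∀ {a b : V} (p : F.Walk a b), p.IsTrail → s(x, y) ∈ p.edges →
      ((F.deleteEdges {s(x, y)}).Reachable a x ∧ (F.deleteEdges {s(x, y)}).Reachable y b) ∨
        ((F.deleteEdges {s(x, y)}).Reachable a y ∧ (F.deleteEdges {s(x, y)}).Reachable x b) := by
  intro a b p
  induction p with
  | nil => intro _ hmem; simp at hmem
  | @cons a c b ha p ih =>
    intro ht hmem
    rw [Walk.isTrail_cons] at ht
    rw [Walk.edges_cons, List.mem_cons] at hmem
    rcases hmem with heq | hmem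
    · have hnot : s(x, y) ∉ p.edges := heq ▸ ht.2
      have hcb : (F.deleteEdges {s(x, y)}).Reachable c b := by
        refine ⟨p.transfer _ fun e he => ?_⟩
        rw [edgeSet_deleteEdges]
        exact ⟨p.edges_subset_edgeSet he, fun h' => hnot (h' ▸ he)⟩
      rcases Sym2.eq_iff.mp heq.symm with ⟨rfl, rfl⟩ | ⟨rfl, rfl⟩
      · exact Or.inl ⟨Reachable.refl _, hcb⟩
      · exact Or.inr ⟨Reachable.refl _, hcb⟩
    · have hne : s(a, c) ≠ s(x, y) := fun h' => ht.2 (h' ▸ hmem)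
      have hac : (F.deleteEdges {s(x, y)}).Adj a c := by
        rw [deleteEdges_adj]; exact ⟨ha, by simpa using hne⟩
      rcases ih ht.1 hmem with ⟨h1, h2⟩ | ⟨h1, h2⟩
      · exact Or.inl ⟨hac.reachable.trans h1, h2⟩
      · exact Or.inr ⟨hac.reachable.trans h1, h2⟩

lemma card_cc_sup_edge [Fintype V] {H : SimpleGraph V} {x y : V} (hne : x ≠ y)
    (hnr : ¬H.Reachable x y) :
    Nat.card (H ⊔ edge x y).ConnectedComponent + 1 = Nat.card H.ConnectedComponent := by
  classical
  set F := H ⊔ edge x y with hFdef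
  have hHF : H ≤ F := le_sup_left
  have hFadj : F.Adj x y := by
    rw [hFdef, sup_adj, edge_adj]; exact Or.inr ⟨Or.inl ⟨rfl, rfl⟩, hne⟩
  haveI : Fintype H.ConnectedComponent := Fintype.ofFinite _
  haveI : Fintype F.ConnectedComponent := Fintype.ofFinite _
  set φ : H.ConnectedComponent → F.ConnectedComponent :=
    ConnectedComponent.map (Hom.ofLE hHF) with hφdef
  have hφmk : ∀ v : V, φ (H.connectedComponentMk v) = F.connectedComponentMk v := fun v => rfl
  have hreach : ∀ u v : V, F.Reachable u v ↔
      H.Reachable u v ∨ (H.Reachable u x ∧ H.Reachable y v) ∨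
        (H.Reachable u y ∧ H.Reachable x v) := fun u v => reachable_sup_edge_iff
  set cx := F.connectedComponentMk x with hcx
  have hcy : F.connectedComponentMk y = cx := (ConnectedComponent.connectedComponentMk_eq_of_adj hFadj).symm
  have hcard : Fintype.card H.ConnectedComponent =
      ∑ c : F.ConnectedComponent, (Finset.univ.filter (fun d => φ d = c)).card := by
    exact Finset.card_eq_sum_card_fiberwise (fun d _ => Finset.mem_univ _)
  have hfiber1 : ∀ c : F.ConnectedComponent, c ≠ cx →
      (Finset.univ.filter (fun d => φ d = c)).card = 1 := by
    intro c hc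
    obtain ⟨v, rfl⟩ := c.exists_rep
    rw [Finset.card_eq_one]
    refine ⟨H.connectedComponentMk v, ?_⟩
    ext d
    simp only [Finset.mem_filter, Finset.mem_univ, true_and, Finset.mem_singleton]
    constructor
    · intro hd
      obtain ⟨u, rfl⟩ := d.exists_rep
      have := (hreach u v).mp (ConnectedComponent.exact hd)
      rcases this with h | ⟨h1, h2⟩ | ⟨h1, h2⟩
      · exact ConnectedComponent.sound h
      · have hvx : F.Reachable v x :=
          ((ConnectedComponent.exact hd : F.Reachable u v).symm).trans (h1.mono hHF)
        exact absurd (ConnectedComponent.sound hvx) hc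
      · have hvy : F.Reachable v y :=
          ((ConnectedComponent.exact hd : F.Reachable u v).symm).trans (h1.mono hHF)
        exact absurd ((ConnectedComponent.sound hvy).trans hcy) hc
    · rintro rfl; exact rfl
  have hfiber2 : (Finset.univ.filter (fun d => φ d = cx)).card = 2 := by
    have : (Finset.univ.filter (fun d => φ d = cx)) =
        {H.connectedComponentMk x, H.connectedComponentMk y} := by
      ext d
      simp only [Finset.mem_filter, Finset.mem_univ, true_and, Finset.mem_insert,
        Finset.mem_singleton]
      constructor
      · intro hd
        obtain ⟨u, rfl⟩ := d.exists_rep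
        have := (hreach u x).mp (ConnectedComponent.exact hd)
        rcases this with h | ⟨h1, h2⟩ | ⟨h1, h2⟩
        · exact Or.inl (ConnectedComponent.sound h)
        · exact Or.inl (ConnectedComponent.sound h1)
        · exact Or.inr (ConnectedComponent.sound h1)
      · rintro (rfl | rfl)
        · exact rfl
        · exact hcy
    rw [this]
    rw [Finset.card_insert_of_notMem, Finset.card_singleton]
    simp only [Finset.mem_singleton]
    exact fun h => hnr (ConnectedComponent.exact h)
  have hsum : ∑ c : F.ConnectedComponent, (Finset.univ.filter (fun d => φ d = c)).card =
      ∑ c ∈ Finset.univ.erase cx, (Finset.univ.filter (fun d => φ d = c)).card + 2 := by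
    rw [← hfiber2]
    exact (Finset.sum_erase_add _ _ (Finset.mem_univ cx)).symm
  have hsum1 : ∑ c ∈ Finset.univ.erase cx, (Finset.univ.filter (fun d => φ d = c)).card =
      (Finset.univ.erase cx).card := by
    rw [Finset.card_eq_sum_ones]
    exact Finset.sum_congr rfl fun c hc => hfiber1 c (Finset.ne_of_mem_erase hc)
  have hpos : 0 < Fintype.card F.ConnectedComponent :=
    Fintype.card_pos_iff.mpr ⟨cx⟩
  rw [Nat.card_eq_fintype_card, Nat.card_eq_fintype_card, hcard, hsum, hsum1,
    Finset.card_erase_of_mem (Finset.mem_univ cx), Finset.card_univ]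
  omega

lemma bot_cc_card [Fintype V] :
    Nat.card (⊥ : SimpleGraph V).ConnectedComponent = Fintype.card V := by
  rw [← Nat.card_eq_fintype_card]
  exact Nat.card_congr
    { toFun := fun c => c.lift id fun v w p _ => reachable_bot.mp ⟨p⟩
      invFun := fun v => (⊥ : SimpleGraph V).connectedComponentMk v
      left_inv := fun c => c.ind fun v => rfl
      right_inv := fun v => rfl }

lemma forest_card [Fintype V] :
    ∀ (n : ℕ) (F : SimpleGraph V), F.edgeSet.ncard = n → F.IsAcyclic →
      F.edgeSet.ncard + Nat.card F.ConnectedComponent = Fintype.card V := by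
  intro n
  induction n with
  | zero =>
    intro F h0 _
    have hbot : F = ⊥ := edgeSet_eq_empty.mp ((Set.ncard_eq_zero (Set.toFinite _)).mp h0)
    rw [hbot] at h0 ⊢
    rw [h0, bot_cc_card]
    omega
  | succ n ih =>
    intro F hn hac
    have hne : F.edgeSet.Nonempty := by
      rw [Set.nonempty_iff_ne_empty]
      intro h
      rw [h, Set.ncard_empty] at hn
      omega
    obtain ⟨f, hf⟩ := hne
    induction f using Sym2.ind with
    | _ x y =>
    have hxy : F.Adj x y := (F.mem_edgeSet).mp hf
    set H := F.deleteEdges {s(x, y)} with hHdef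
    have hHac : H.IsAcyclic := acyclic_mono (deleteEdges_le _) hac
    have hHn : H.edgeSet.ncard = n := by
      rw [hHdef, edgeSet_deleteEdges, Set.ncard_diff_singleton_of_mem hf, hn]
      omega
    have hbr : ¬H.Reachable x y :=
      (isBridge_iff.mp (isAcyclic_iff_forall_adj_isBridge.mp hac hxy))
    have hdecomp : F = H ⊔ edge x y := sup_edge_decomp hxy
    have hcc := card_cc_sup_edge hxy.ne hbr
    rw [← hdecomp] at hcc
    have hIH := ih H hHn hHac
    omega

end Aux

open SimpleGraph in
theorem msf_threshold_size {V : Type*} [Fintype V] (G : SimpleGraph V) (w : Sym2 V → ℝ)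
    (F : SimpleGraph V) (hF : IsMSF w G F) (t : ℝ) :
    {e ∈ F.edgeSet | w e ≤ t}.ncard =
      Fintype.card V - Nat.card (leSub w G t).ConnectedComponent ∧
    IsSpanningForest (leSub w G t) (leSub w F t) := by
  classical
  obtain ⟨⟨hFG, hFac, hFreach⟩, hmin⟩ := hF
  set Ft := leSub w F t with hFt
  set Gt := leSub w G t with hGt
  have hFtE : Ft.edgeSet = {e ∈ F.edgeSet | w e ≤ t} := by
    rw [hFt, leSub, edgeSet_fromEdgeSet]
    ext e
    simp only [Set.mem_diff, Set.mem_setOf_eq]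
    exact ⟨fun h => h.1, fun h => ⟨h, fun hd => (F.not_isDiag_of_mem_edgeSet h.1) hd⟩⟩
  have hGtE : Gt.edgeSet = {e ∈ G.edgeSet | w e ≤ t} := by
    rw [hGt, leSub, edgeSet_fromEdgeSet]
    ext e
    simp only [Set.mem_diff, Set.mem_setOf_eq]
    exact ⟨fun h => h.1, fun h => ⟨h, fun hd => (G.not_isDiag_of_mem_edgeSet h.1) hd⟩⟩
  have hFtF : Ft ≤ F := edgeSet_subset_edgeSet.mp (by rw [hFtE]; exact Set.sep_subset _ _)
  have hFtGt : Ft ≤ Gt := by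
    apply edgeSet_subset_edgeSet.mp
    rw [hFtE, hGtE]
    exact fun e he => ⟨edgeSet_mono hFG he.1, he.2⟩
  have hFtac : Ft.IsAcyclic := acyclic_mono hFtF hFac
  have key : ∀ a b : V, Gt.Adj a b → Ft.Reachable a b := by
    intro a b hab
    by_contra hcon
    rw [hGt, leSub, fromEdgeSet_adj] at hab
    obtain ⟨⟨hGe, hwe⟩, hne⟩ := hab
    have hGadj : G.Adj a b := (G.mem_edgeSet).mp hGe
    have hFr : F.Reachable a b := (hFreach a b).mpr hGadj.reachable
    obtain ⟨p⟩ := hFr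
    set q : F.Path a b := p.toPath with hqdef
    have htrail : (q : F.Walk a b).IsTrail := q.2.isTrail
    have hex : ∃ f ∈ (q : F.Walk a b).edges, ¬ w f ≤ t := by
      by_contra hall
      push_neg at hall
      refine hcon ⟨(q : F.Walk a b).transfer Ft fun e he => ?_⟩
      rw [hFtE]
      exact ⟨(q : F.Walk a b).edges_subset_edgeSet he, hall e he⟩
    obtain ⟨f, hfq, hwf⟩ := hex
    revert hfq hwf
    induction f using Sym2.ind with
    | _ x y =>
    intro hfq hwf
    have hfF : F.Adj x y := (F.mem_edgeSet).mp ((q : F.Walk a b).edges_subset_edgeSet hfq)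
    set H := F.deleteEdges {s(x, y)} with hH
    have hHF : H ≤ F := deleteEdges_le _
    have hbr : ¬H.Reachable x y :=
      (isBridge_iff.mp (isAcyclic_iff_forall_adj_isBridge.mp hFac hfF))
    have hsplit := trail_split (q : F.Walk a b) htrail hfq
    have hnrab : ¬H.Reachable a b := by
      intro hab'
      rcases hsplit with ⟨h1, h2⟩ | ⟨h1, h2⟩
      · exact hbr (h1.symm.trans (hab'.trans h2.symm))
      · exact hbr ((h2.trans hab'.symm).trans h1)
    set F' := H ⊔ edge a b with hF'
    have hF'G : F' ≤ G := sup_le (hHF.trans hFG)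
      (edgeSet_subset_edgeSet.mp
        (by rw [edge_edgeSet_of_ne hne]; exact Set.singleton_subset_iff.mpr hGe))
    have hedge : F'.Adj a b := by
      rw [hF', sup_adj, edge_adj]; exact Or.inr ⟨Or.inl ⟨rfl, rfl⟩, hne⟩
    have hFF' : ∀ u v : V, F.Adj u v → F'.Reachable u v := by
      intro u v huv
      rcases eq_or_ne s(u, v) s(x, y) with he | he
      · have hxyF' : F'.Reachable x y := by
          rcases hsplit with ⟨h1, h2⟩ | ⟨h1, h2⟩
          · exact ((h1.symm.mono le_sup_left).trans hedge.reachable).trans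
              (h2.symm.mono le_sup_left)
          · exact ((h2.mono le_sup_left).trans hedge.reachable.symm).trans
              (h1.mono le_sup_left)
        rcases Sym2.eq_iff.mp he with ⟨rfl, rfl⟩ | ⟨rfl, rfl⟩
        · exact hxyF'
        · exact hxyF'.symm
      · have hH' : H.Adj u v := by
          rw [hH, deleteEdges_adj]; exact ⟨huv, by simpa using he⟩
        exact hH'.reachable.mono le_sup_left
    have hF'reach : ∀ u v : V, F'.Reachable u v ↔ G.Reachable u v := fun u v =>
      ⟨fun h => h.mono hF'G, fun h => reach_of_adj_reach hFF' ((hFreach u v).mpr h)⟩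
    have hHac : H.IsAcyclic := acyclic_mono hHF hFac
    have heH : s(a, b) ∉ H.edgeSet := fun hmem =>
      hnrab ((H.mem_edgeSet).mp hmem).reachable
    have hEF' : F'.edgeSet = H.edgeSet ∪ {s(a, b)} := by
      rw [hF', edgeSet_sup, edge_edgeSet_of_ne hne]
    have hF'ac : F'.IsAcyclic := by
      rw [isAcyclic_iff_forall_adj_isBridge]
      intro u v huv
      rw [isBridge_iff]
      show ¬(F' \ fromEdgeSet {s(u, v)}).Reachable u v
      rcases eq_or_ne s(u, v) s(a, b) with he | he
      · have hED : F' \ fromEdgeSet {s(u, v)} = H := by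
          rw [← edgeSet_inj]
          show (F'.deleteEdges {s(u, v)}).edgeSet = H.edgeSet
          rw [edgeSet_deleteEdges, hEF', he, Set.union_diff_right,
            Set.diff_singleton_eq_self heH]
        rw [hED]
        rcases Sym2.eq_iff.mp he with ⟨rfl, rfl⟩ | ⟨rfl, rfl⟩
        · exact hnrab
        · exact fun h => hnrab h.symm
      · have hHuv : H.Adj u v := by
          rcases (sup_adj _ _ _ _).mp huv with h | h
          · exact h
          · exfalso
            rw [edge_adj] at h
            rcases h.1 with ⟨rfl, rfl⟩ | ⟨rfl, rfl⟩
            · exact he rfl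
            · exact he Sym2.eq_swap
        have hbrH : ¬(H \ fromEdgeSet {s(u, v)}).Reachable u v :=
          (isBridge_iff.mp (isAcyclic_iff_forall_adj_isBridge.mp hHac hHuv))
        have hED : F' \ fromEdgeSet {s(u, v)} = (H \ fromEdgeSet {s(u, v)}) ⊔ edge a b := by
          rw [← edgeSet_inj]
          have hne' : s(a, b) ≠ s(u, v) := fun h => he h.symm
          have e1 : (F' \ fromEdgeSet {s(u, v)}).edgeSet = F'.edgeSet \ {s(u, v)} :=
            edgeSet_deleteEdges _
          have e2 : ((H \ fromEdgeSet {s(u, v)}) ⊔ edge a b).edgeSet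
              = (H.edgeSet \ {s(u, v)}) ∪ {s(a, b)} := by
            rw [edgeSet_sup, edge_edgeSet_of_ne hne]
            congr 1
            exact edgeSet_deleteEdges _
          rw [e1, e2, hEF']
          ext e
          simp only [Set.mem_diff, Set.mem_union, Set.mem_singleton_iff]
          constructor
          · rintro ⟨h1 | rfl, h2⟩
            · exact Or.inl ⟨h1, h2⟩
            · exact Or.inr rfl
          · rintro (⟨h1, h2⟩ | rfl)
            · exact ⟨Or.inl h1, h2⟩
            · exact ⟨Or.inr rfl, hne'⟩
        intro hr
        rw [hED] at hr
        rcases reachable_sup_edge_iff.mp hr with h | ⟨h1, h2⟩ | ⟨h1, h2⟩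
        · exact hbrH h
        · exact hnrab (((h1.mono sdiff_le).symm.trans hHuv.reachable).trans
            (h2.mono sdiff_le).symm)
        · exact hnrab ((h2.mono sdiff_le).trans
            (hHuv.reachable.symm.trans (h1.mono sdiff_le)))
    have hSF' : IsSpanningForest G F' := ⟨hF'G, hF'ac, hF'reach⟩
    have hfF' : s(x, y) ∈ F.edgeSet := (q : F.Walk a b).edges_subset_edgeSet hfq
    have heF : s(a, b) ∉ F.edgeSet := by
      intro hmem
      apply hcon
      have : Ft.Adj a b := by
        rw [hFt, leSub, fromEdgeSet_adj]; exact ⟨⟨hmem, hwe⟩, hne⟩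
      exact this.reachable
    have hfinF : F.edgeSet.Finite := Set.toFinite _
    have hfinF' : F'.edgeSet.Finite := Set.toFinite _
    have hTW : totalWeight w F = ∑ e ∈ hfinF.toFinset, w e := by
      rw [totalWeight, ← finsum_mem_coe_finset, Set.Finite.coe_toFinset]
    have hTW' : totalWeight w F' = ∑ e ∈ hfinF'.toFinset, w e := by
      rw [totalWeight, ← finsum_mem_coe_finset, Set.Finite.coe_toFinset]
    have hFsetF' : hfinF'.toFinset = insert s(a, b) (hfinF.toFinset.erase s(x, y)) := by
      ext e
      simp only [Set.Finite.mem_toFinset, hEF', hH, edgeSet_deleteEdges, Set.mem_union,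
        Set.mem_diff, Set.mem_singleton_iff, Finset.mem_insert, Finset.mem_erase,
        Set.Finite.mem_toFinset]
      tauto
    have hnab : s(a, b) ∉ hfinF.toFinset.erase s(x, y) := by
      simp only [Finset.mem_erase, Set.Finite.mem_toFinset]
      exact fun h => heF h.2
    have hsum : ∑ e ∈ (hfinF.toFinset.erase s(x, y)), w e + w s(x, y)
        = ∑ e ∈ hfinF.toFinset, w e :=
      Finset.sum_erase_add _ _ (hfinF.mem_toFinset.mpr hfF')
    have hlt : totalWeight w F' < totalWeight w F := by
      rw [hTW, hTW', hFsetF', Finset.sum_insert hnab]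
      push_neg at hwf
      linarith
    exact absurd (hmin F' hSF') (not_le.mpr hlt)
  have hreachiff : ∀ u v : V, Ft.Reachable u v ↔ Gt.Reachable u v := fun u v =>
    ⟨fun h => h.mono hFtGt, fun h => reach_of_adj_reach key h⟩
  refine ⟨?_, hFtGt, hFtac, hreachiff⟩
  have hc := forest_card (Ft.edgeSet.ncard) Ft rfl hFtac
  have hccEq : Nat.card Ft.ConnectedComponent = Nat.card Gt.ConnectedComponent :=
    Nat.card_congr (Quot.congrRight fun a b => hreachiff a b)
  rw [hFtE] at hc
  omega
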